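/- Let ℋ be a real-analytic function on an open set O ⊆ ℝ³ and let ψ₁, ψ₂: ℝ × (−R,R) → O be real-analytic maps, both satisfying the system ψ_uu + ψ_vv = 2 ℋ(ψ) ψ_u ×_L ψ_v on ℝ × (−R,R), and having the same Cauchy data on the real axis: ψ₁(u,0) = ψ₂(u,0) and ∂_vψ₁(u,0) = ∂_vψ₂(u,0) for all u ∈ ℝ. Then ψ₁ = ψ₂ on all of ℝ × (−R,R). -/

import Mathlib

noncomputable section

open Real Set Metric Filter MeasureTheory

/-- Points of Minkowski 3-space, as nested pairs. -/
abbrev R3 : Type := ℝ × ℝ × ℝ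

/-- The Lorentzian inner product `⟨a,b⟩_L = a₁b₁ + a₂b₂ − a₃b₃` of Minkowski 3-space. -/
def lor (a b : R3) : ℝ := a.1 * b.1 + a.2.1 * b.2.1 - a.2.2 * b.2.2

/-- The Lorentzian cross product
`a ×_L b = (a₃b₂ − a₂b₃, a₁b₃ − a₃b₁, a₁b₂ − a₂b₁)`. -/
def lcross (a b : R3) : R3 :=
  (a.2.2 * b.2.1 - a.2.1 * b.2.2, a.1 * b.2.2 - a.2.2 * b.1, a.1 * b.2.1 - a.2.1 * b.1)

/-- Partial derivative with respect to the first variable. -/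
def pd1 {E : Type*} [NormedAddCommGroup E] [NormedSpace ℝ E]
    (f : ℝ × ℝ → E) (p : ℝ × ℝ) : E := fderiv ℝ f p (1, 0)

/-- Partial derivative with respect to the second variable. -/
def pd2 {E : Type*} [NormedAddCommGroup E] [NormedSpace ℝ E]
    (f : ℝ × ℝ → E) (p : ℝ × ℝ) : E := fderiv ℝ f p (0, 1)

def zx (z : ℝ × ℝ → ℝ) : ℝ × ℝ → ℝ := pd1 z
def zy (z : ℝ × ℝ → ℝ) : ℝ × ℝ → ℝ := pd2 z
def zxx (z : ℝ × ℝ → ℝ) : ℝ × ℝ → ℝ := pd1 (zx z)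
def zxy (z : ℝ × ℝ → ℝ) : ℝ × ℝ → ℝ := pd2 (zx z)
def zyy (z : ℝ × ℝ → ℝ) : ℝ × ℝ → ℝ := pd2 (zy z)

/-- Hessian determinant `z_xx z_yy − z_xy²`. -/
def hessDet (z : ℝ × ℝ → ℝ) (p : ℝ × ℝ) : ℝ := zxx z p * zyy z p - (zxy z p) ^ 2

/-- The punctured disk `{(x,y) : 0 < (x−x₀)² + (y−y₀)² < ρ²}`. -/
def PDisk (x₀ y₀ ρ : ℝ) : Set (ℝ × ℝ) :=
  {p | 0 < (p.1 - x₀) ^ 2 + (p.2 - y₀) ^ 2 ∧ (p.1 - x₀) ^ 2 + (p.2 - y₀) ^ 2 < ρ ^ 2}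

/-- `z` is an elliptic solution of the prescribed mean curvature equation for `H` on `U`,
with graph contained in `O`. -/
def IsEllSol (H : R3 → ℝ) (O : Set R3) (U : Set (ℝ × ℝ)) (z : ℝ × ℝ → ℝ) : Prop :=
  ContDiffOn ℝ 2 z U ∧
  (∀ p ∈ U, ((p.1, p.2, z p) : R3) ∈ O) ∧
  (∀ p ∈ U, (zx z p) ^ 2 + (zy z p) ^ 2 < 1) ∧
  (∀ p ∈ U,
    (1 - (zy z p) ^ 2) * zxx z p + 2 * zx z p * zy z p * zxy z p
        + (1 - (zx z p) ^ 2) * zyy z p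
      = 2 * H (p.1, p.2, z p) * (1 - (zx z p) ^ 2 - (zy z p) ^ 2) ^ ((3 : ℝ) / 2))

/-- The isolated singularity of `z` at `(x₀,y₀)` is removable: some `C²` function on a full
disk centered at `(x₀,y₀)` agrees with `z` on a punctured neighborhood. -/
def RemovableSing (x₀ y₀ : ℝ) (z : ℝ × ℝ → ℝ) : Prop :=
  ∃ ε > 0, ∃ Z : ℝ × ℝ → ℝ,
    ContDiffOn ℝ 2 Z (ball ((x₀, y₀) : ℝ × ℝ) ε) ∧
    ∀ p ∈ ball ((x₀, y₀) : ℝ × ℝ) ε, p ≠ (x₀, y₀) → Z p = z p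

/-- `H` is of class `C^{k,α}` on `O`: it is `C^k` and its `k`-th derivative is locally
`α`-Hölder on `O`. -/
def IsCkalpha (k : ℕ) (α : NNReal) (H : R3 → ℝ) (O : Set R3) : Prop :=
  ContDiffOn ℝ k H O ∧
  ∀ p ∈ O, ∃ ε > 0, ∃ C : NNReal,
    HolderOnWith C α (iteratedFDeriv ℝ k H) (ball p ε ∩ O)

/-- The open strip `ℝ × (0,R)`. -/
def Strip (R : ℝ) : Set (ℝ × ℝ) := {p | 0 < p.2 ∧ p.2 < R}

/-- The open strip `ℝ × (−R,R)`. -/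
def Strip2 (R : ℝ) : Set (ℝ × ℝ) := {p | -R < p.2 ∧ p.2 < R}

/-- The half-open strip `ℝ × [0,R)`. -/
def StripCl (R : ℝ) : Set (ℝ × ℝ) := {p | 0 ≤ p.2 ∧ p.2 < R}

/-- First two components of `ψ`: the planar projection `Π = (ψ₁, ψ₂)`. -/
def Pi2 (ψ : ℝ × ℝ → R3) (p : ℝ × ℝ) : ℝ × ℝ := ((ψ p).1, (ψ p).2.1)

def comp1 (ψ : ℝ × ℝ → R3) : ℝ × ℝ → ℝ := fun p => (ψ p).1
def comp2 (ψ : ℝ × ℝ → R3) : ℝ × ℝ → ℝ := fun p => (ψ p).2.1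
def comp3 (ψ : ℝ × ℝ → R3) : ℝ × ℝ → ℝ := fun p => (ψ p).2.2

/-- `ψ : ℝ × (0,R) → ℝ³` is a conformal parametrization of the graph of `z` near the
singularity `(x₀,y₀)`: it is 2π-periodic in `u`, its planar projection induces a
diffeomorphism with positive Jacobian from `(ℝ/2πℤ) × (0,R)` onto a punctured
neighborhood `W ⊆ Ω` of `(x₀,y₀)`, its third component is `z` of the first two, and the
conformality conditions hold. -/
def IsConfParam (z : ℝ × ℝ → ℝ) (Ω : Set (ℝ × ℝ)) (x₀ y₀ R : ℝ)
    (ψ : ℝ × ℝ → R3) : Prop :=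
  0 < R ∧
  ContDiffOn ℝ 1 ψ (Strip R) ∧
  (∀ u v : ℝ, ψ (u + 2 * π, v) = ψ (u, v)) ∧
  (∃ W : Set (ℝ × ℝ), W ⊆ Ω ∧ ((x₀, y₀) : ℝ × ℝ) ∉ W ∧
      insert ((x₀, y₀) : ℝ × ℝ) W ∈ nhds ((x₀, y₀) : ℝ × ℝ) ∧
      Pi2 ψ '' Strip R = W) ∧
  (∀ p ∈ Strip R, ∀ q ∈ Strip R, Pi2 ψ p = Pi2 ψ q →
      p.2 = q.2 ∧ ∃ n : ℤ, p.1 - q.1 = 2 * π * n) ∧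
  (∀ p ∈ Strip R,
      0 < pd1 (comp1 ψ) p * pd2 (comp2 ψ) p - pd2 (comp1 ψ) p * pd1 (comp2 ψ) p) ∧
  (∀ p ∈ Strip R, comp3 ψ p = z (Pi2 ψ p)) ∧
  (∀ p ∈ Strip R,
      lor (pd1 ψ p) (pd1 ψ p) = lor (pd2 ψ p) (pd2 ψ p) ∧
      0 < lor (pd1 ψ p) (pd1 ψ p) ∧
      lor (pd1 ψ p) (pd2 ψ p) = 0)

/-- `ψ` extends real-analytically across `v = 0`, with `ψ(u,0) = p₀` and
`∂_vψ(u,0) = A(u)(cos u, −sin u, 1)`. -/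
def ExtAnal (ψ : ℝ × ℝ → R3) (R : ℝ) (p₀ : R3) (A : ℝ → ℝ) : Prop :=
  ∃ ε > 0, ∃ Ψ : ℝ × ℝ → R3,
    AnalyticOnNhd ℝ Ψ {p : ℝ × ℝ | -ε < p.2 ∧ p.2 < R} ∧
    (∀ p ∈ Strip R, Ψ p = ψ p) ∧
    (∀ u : ℝ, Ψ (u, 0) = p₀) ∧
    (∀ u : ℝ, pd2 Ψ (u, 0) = (A u * Real.cos u, -(A u * Real.sin u), A u))

/-- The class `𝒜₂` of 2π-periodic, real-analytic, nowhere vanishing functions. -/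
def MemA2 (A : ℝ → ℝ) : Prop :=
  AnalyticOnNhd ℝ A univ ∧ (∀ u : ℝ, A (u + 2 * π) = A u) ∧ ∀ u : ℝ, A u ≠ 0

/-- The class `𝒜₁`: elliptic solutions on a punctured disk of radius `ρ` centered at
`(x₀,y₀)`, extending continuously with value `z₀`, whose Hessian determinant is
nonvanishing on a punctured neighborhood of `(x₀,y₀)`. -/
def MemA1 (H : R3 → ℝ) (O : Set R3) (x₀ y₀ z₀ ρ : ℝ) (z : ℝ × ℝ → ℝ) : Prop :=
  0 < ρ ∧ IsEllSol H O (PDisk x₀ y₀ ρ) z ∧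
  Tendsto z (nhdsWithin ((x₀, y₀) : ℝ × ℝ) (PDisk x₀ y₀ ρ)) (nhds z₀) ∧
  ∃ ε : ℝ, 0 < ε ∧ ε ≤ ρ ∧ ∀ p ∈ PDisk x₀ y₀ ε, hessDet z p ≠ 0

/-- `z` corresponds to `A`: some conformal parametrization of the graph of `z` near the
singularity extends real-analytically across `v = 0` with
`∂_vψ(u,0) = A(u)(cos u, −sin u, 1)`. -/
def Corr (z : ℝ × ℝ → ℝ) (x₀ y₀ z₀ ρ : ℝ) (A : ℝ → ℝ) : Prop :=
  ∃ R : ℝ, ∃ ψ : ℝ × ℝ → R3,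
    IsConfParam z (PDisk x₀ y₀ ρ) x₀ y₀ R ψ ∧ ExtAnal ψ R ((x₀, y₀, z₀) : R3) A

/-- The induced (first fundamental form) metric of the graph of `z`,
`ds² = (1−z_x²)dx² − 2 z_x z_y dx dy + (1−z_y²)dy²`, as a bilinear form. -/
def dsq (z : ℝ × ℝ → ℝ) (p : ℝ × ℝ) (ξ η : ℝ × ℝ) : ℝ :=
  (1 - (zx z p) ^ 2) * ξ.1 * η.1 - zx z p * zy z p * (ξ.1 * η.2 + ξ.2 * η.1)
    + (1 - (zy z p) ^ 2) * ξ.2 * η.2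

/-- `(Ω, ds²)` is conformally equivalent to the planar domain `D`: there is a `C¹`
diffeomorphism `Φ : Ω → D` and a positive function `λ` with
`⟨DΦ(ξ), DΦ(η)⟩_euc = λ · ds²(ξ,η)`. -/
def ConfEquiv (z : ℝ × ℝ → ℝ) (Ω D : Set (ℝ × ℝ)) : Prop :=
  ∃ (Φ : ℝ × ℝ → ℝ × ℝ) (Φinv : ℝ × ℝ → ℝ × ℝ) (lam : ℝ × ℝ → ℝ),
    ContDiffOn ℝ 1 Φ Ω ∧ ContDiffOn ℝ 1 Φinv D ∧
    (∀ p ∈ Ω, Φ p ∈ D ∧ Φinv (Φ p) = p) ∧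
    (∀ q ∈ D, Φinv q ∈ Ω ∧ Φ (Φinv q) = q) ∧
    (∀ p ∈ Ω, 0 < lam p ∧
      ∀ ξ η : ℝ × ℝ, (fderiv ℝ Φ p ξ).1 * (fderiv ℝ Φ p η).1
          + (fderiv ℝ Φ p ξ).2 * (fderiv ℝ Φ p η).2 = lam p * dsq z p ξ η)

section JetHelpers

variable {E : Type*} [NormedAddCommGroup E] [NormedSpace ℝ E]
variable {F : Type*} [NormedAddCommGroup F] [NormedSpace ℝ F]

lemma hasDerivAt_slice2 {f : ℝ × ℝ → E} {u v : ℝ} (hf : DifferentiableAt ℝ f (u, v)) :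
    HasDerivAt (fun t => f (u, t)) (pd2 f (u, v)) v := by
  have h1 : HasDerivAt (fun t : ℝ => ((u, t) : ℝ × ℝ)) (0, 1) v :=
    (hasDerivAt_const v u).prodMk (hasDerivAt_id v)
  exact hf.hasFDerivAt.comp_hasDerivAt v h1

lemma hasDerivAt_slice1 {f : ℝ × ℝ → E} {u v : ℝ} (hf : DifferentiableAt ℝ f (u, v)) :
    HasDerivAt (fun t => f (t, v)) (pd1 f (u, v)) u := by
  have h1 : HasDerivAt (fun t : ℝ => ((t, v) : ℝ × ℝ)) (1, 0) u :=
    (hasDerivAt_id u).prodMk (hasDerivAt_const u v)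
  exact hf.hasFDerivAt.comp_hasDerivAt u h1

variable [CompleteSpace E]

theorem AnalyticOnNhd.pd1' {U : Set (ℝ × ℝ)} {f : ℝ × ℝ → E} (hf : AnalyticOnNhd ℝ f U) :
    AnalyticOnNhd ℝ (pd1 f) U := by
  intro p hp
  exact ((ContinuousLinearMap.apply ℝ E ((1 : ℝ), (0 : ℝ))).analyticAt
    (fderiv ℝ f p)).comp (hf.fderiv p hp)

theorem AnalyticOnNhd.pd2' {U : Set (ℝ × ℝ)} {f : ℝ × ℝ → E} (hf : AnalyticOnNhd ℝ f U) :
    AnalyticOnNhd ℝ (pd2 f) U := by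
  intro p hp
  exact ((ContinuousLinearMap.apply ℝ E ((0 : ℝ), (1 : ℝ))).analyticAt
    (fderiv ℝ f p)).comp (hf.fderiv p hp)

theorem AnalyticOnNhd.pd2_iter {U : Set (ℝ × ℝ)} {f : ℝ × ℝ → E}
    (hf : AnalyticOnNhd ℝ f U) (n : ℕ) : AnalyticOnNhd ℝ (pd2^[n] f) U := by
  induction n generalizing f with
  | zero => exact hf
  | succ n ih => rw [Function.iterate_succ_apply]; exact ih hf.pd2'

lemma eqOn_pd1 {U : Set (ℝ × ℝ)} (hU : IsOpen U) {f g : ℝ × ℝ → E} (h : Set.EqOn f g U) :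
    Set.EqOn (pd1 f) (pd1 g) U := by
  intro p hp
  unfold pd1
  rw [Filter.EventuallyEq.fderiv_eq (Filter.eventuallyEq_of_mem (hU.mem_nhds hp) h)]

lemma eqOn_pd2 {U : Set (ℝ × ℝ)} (hU : IsOpen U) {f g : ℝ × ℝ → E} (h : Set.EqOn f g U) :
    Set.EqOn (pd2 f) (pd2 g) U := by
  intro p hp
  unfold pd2
  rw [Filter.EventuallyEq.fderiv_eq (Filter.eventuallyEq_of_mem (hU.mem_nhds hp) h)]

lemma eqOn_pd2_iter {U : Set (ℝ × ℝ)} (hU : IsOpen U) {f g : ℝ × ℝ → E}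
    (h : Set.EqOn f g U) (n : ℕ) : Set.EqOn (pd2^[n] f) (pd2^[n] g) U := by
  induction n generalizing f g with
  | zero => exact h
  | succ n ih =>
    rw [Function.iterate_succ_apply, Function.iterate_succ_apply]
    exact ih (eqOn_pd2 hU h)

lemma iteratedDeriv_congr_nhds {f g : ℝ → E} {x : ℝ} (h : f =ᶠ[nhds x] g) (n : ℕ) :
    iteratedDeriv n f x = iteratedDeriv n g x := by
  induction n generalizing f g with
  | zero => simpa using h.eq_of_nhds
  | succ n ih =>
    rw [iteratedDeriv_succ', iteratedDeriv_succ']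
    exact ih h.deriv

lemma slice2_iteratedDeriv {U : Set (ℝ × ℝ)} (hU : IsOpen U) {f : ℝ × ℝ → E}
    (hf : AnalyticOnNhd ℝ f U) (n : ℕ) {u v : ℝ} (hp : (u, v) ∈ U) :
    iteratedDeriv n (fun t => f (u, t)) v = pd2^[n] f (u, v) := by
  induction n generalizing f with
  | zero => simp
  | succ n ih =>
    have hop : {t : ℝ | (u, t) ∈ U} ∈ nhds v := by
      have hc : Continuous fun t : ℝ => ((u, t) : ℝ × ℝ) := by fun_prop
      exact hc.continuousAt.preimage_mem_nhds (hU.mem_nhds hp)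
    have hev : deriv (fun t => f (u, t)) =ᶠ[nhds v] fun t => pd2 f (u, t) := by
      filter_upwards [hop] with t ht
      exact (hasDerivAt_slice2 ((hf _ ht).differentiableAt)).deriv
    rw [iteratedDeriv_succ', iteratedDeriv_congr_nhds hev n, ih hf.pd2',
      Function.iterate_succ_apply]

lemma pd_comm {U : Set (ℝ × ℝ)} (hU : IsOpen U) {f : ℝ × ℝ → E}
    (hf : AnalyticOnNhd ℝ f U) {p : ℝ × ℝ} (hp : p ∈ U) :
    pd2 (pd1 f) p = pd1 (pd2 f) p := by
  have hdp : DifferentiableAt ℝ (fderiv ℝ f) p := (hf.fderiv p hp).differentiableAt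
  have hsym : IsSymmSndFDerivAt ℝ f p := by
    have h2 : ContDiffAt ℝ 2 f p := (hf p hp).contDiffAt
    exact h2.isSymmSndFDerivAt (by simp [minSmoothness_of_isRCLikeNormedField])
  have e1 : pd2 (pd1 f) p = fderiv ℝ (fderiv ℝ f) p (0, 1) (1, 0) := by
    show fderiv ℝ (fun q => fderiv ℝ f q ((1 : ℝ), (0 : ℝ))) p (0, 1) = _
    rw [fderiv_clm_apply (c := fderiv ℝ f) (u := fun _ => ((1 : ℝ), (0 : ℝ))) hdp
      (differentiableAt_const _)]
    simp
  have e2 : pd1 (pd2 f) p = fderiv ℝ (fderiv ℝ f) p (1, 0) (0, 1) := by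
    show fderiv ℝ (fun q => fderiv ℝ f q ((0 : ℝ), (1 : ℝ))) p (1, 0) = _
    rw [fderiv_clm_apply (c := fderiv ℝ f) (u := fun _ => ((0 : ℝ), (1 : ℝ))) hdp
      (differentiableAt_const _)]
    simp
  rw [e1, e2]
  exact hsym.eq _ _

lemma pd_comm_iter {U : Set (ℝ × ℝ)} (hU : IsOpen U) {f : ℝ × ℝ → E}
    (hf : AnalyticOnNhd ℝ f U) (n : ℕ) :
    Set.EqOn (pd2^[n] (pd1 f)) (pd1 (pd2^[n] f)) U := by
  induction n generalizing f with
  | zero => intro p hp; rfl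
  | succ n ih =>
    intro p hp
    have e1 : Set.EqOn (pd2 (pd1 f)) (pd1 (pd2 f)) U := fun q hq => pd_comm hU hf hq
    calc pd2^[n + 1] (pd1 f) p = pd2^[n] (pd2 (pd1 f)) p := by
          rw [Function.iterate_succ_apply]
      _ = pd2^[n] (pd1 (pd2 f)) p := eqOn_pd2_iter hU e1 n hp
      _ = pd1 (pd2^[n] (pd2 f)) p := ih hf.pd2' hp
      _ = pd1 (pd2^[n + 1] f) p := by rw [Function.iterate_succ_apply]

lemma pd2_iter_sub {U : Set (ℝ × ℝ)} (hU : IsOpen U) {f g : ℝ × ℝ → E}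
    (hf : AnalyticOnNhd ℝ f U) (hg : AnalyticOnNhd ℝ g U) (n : ℕ) :
    Set.EqOn (pd2^[n] (fun q => f q - g q)) (fun q => pd2^[n] f q - pd2^[n] g q) U := by
  induction n generalizing f g with
  | zero => intro p hp; rfl
  | succ n ih =>
    intro p hp
    have e1 : Set.EqOn (pd2 (fun q => f q - g q)) (fun q => pd2 f q - pd2 g q) U := by
      intro q hq
      have : fderiv ℝ (fun y => f y - g y) q = fderiv ℝ f q - fderiv ℝ g q :=
        fderiv_sub ((hf q hq).differentiableAt) ((hg q hq).differentiableAt)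
      simp only [pd2, this, ContinuousLinearMap.sub_apply]
    calc pd2^[n + 1] (fun q => f q - g q) p
        = pd2^[n] (pd2 (fun q => f q - g q)) p := by rw [Function.iterate_succ_apply]
      _ = pd2^[n] (fun q => pd2 f q - pd2 g q) p := eqOn_pd2_iter hU e1 n hp
      _ = pd2^[n] (pd2 f) p - pd2^[n] (pd2 g) p := ih hf.pd2' hg.pd2' hp
      _ = pd2^[n + 1] f p - pd2^[n + 1] g p := by
          rw [Function.iterate_succ_apply, Function.iterate_succ_apply]

lemma AnalyticAt.deriv' {f : ℝ → E} {x : ℝ} (hf : AnalyticAt ℝ f x) :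
    AnalyticAt ℝ (deriv f) x := by
  obtain ⟨s, hs_an, hs_open, hs_mem⟩ := _root_.eventually_nhds_iff.mp hf.eventually_analyticAt
  exact AnalyticOnNhd.deriv (fun y hy => hs_an y hy) x hs_mem

lemma iteratedDeriv_prodMk [CompleteSpace F] {f : ℝ → E} {g : ℝ → F} {x : ℝ}
    (hf : AnalyticAt ℝ f x) (hg : AnalyticAt ℝ g x) (n : ℕ) :
    iteratedDeriv n (fun t => (f t, g t)) x = (iteratedDeriv n f x, iteratedDeriv n g x) := by
  induction n generalizing f g with
  | zero => simp
  | succ n ih =>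
    have hev : deriv (fun t => (f t, g t)) =ᶠ[nhds x] fun t => (deriv f t, deriv g t) := by
      filter_upwards [hf.eventually_analyticAt, hg.eventually_analyticAt] with t htf htg
      exact (htf.differentiableAt.hasDerivAt.prodMk htg.differentiableAt.hasDerivAt).deriv
    rw [iteratedDeriv_succ', iteratedDeriv_congr_nhds hev n, ih hf.deriv' hg.deriv',
      ← iteratedDeriv_succ', ← iteratedDeriv_succ']

lemma iteratedFDeriv_apply_eq_of_iteratedDeriv_eq {f g : ℝ → E} {x : ℝ} {n : ℕ}
    (h : iteratedDeriv n f x = iteratedDeriv n g x) (m : Fin n → ℝ) :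
    iteratedFDeriv ℝ n f x m = iteratedFDeriv ℝ n g x m := by
  have e : ∀ F : ℝ → E, iteratedFDeriv ℝ n F x m = (∏ i, m i) • iteratedDeriv n F x := by
    intro F
    have hm : m = fun i => m i • (1 : ℝ) := by funext i; simp
    calc iteratedFDeriv ℝ n F x m = iteratedFDeriv ℝ n F x (fun i => m i • (1 : ℝ)) := by
          rw [← hm]
      _ = (∏ i, m i) • iteratedFDeriv ℝ n F x (fun _ => 1) :=
          (iteratedFDeriv ℝ n F x).map_smul_univ m (fun _ => 1)
      _ = (∏ i, m i) • iteratedDeriv n F x := by rw [iteratedDeriv_eq_iteratedFDeriv]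
  rw [e f, e g, h]

lemma eventuallyEq_of_iteratedDeriv_eq {f g : ℝ → E}
    (hf : AnalyticAt ℝ f 0) (hg : AnalyticAt ℝ g 0)
    (h : ∀ n, iteratedDeriv n f 0 = iteratedDeriv n g 0) : f =ᶠ[nhds (0 : ℝ)] g := by
  obtain ⟨p, hp0⟩ := hf
  obtain ⟨q, hq0⟩ := hg
  obtain ⟨r₁, hp⟩ := hp0
  obtain ⟨r₂, hq⟩ := hq0
  have hr : 0 < min r₁ r₂ := lt_min hp.r_pos hq.r_pos
  have hp' := hp.mono hr (min_le_left _ _)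
  have hq' := hq.mono hr (min_le_right _ _)
  filter_upwards [EMetric.ball_mem_nhds (0 : ℝ) hr] with y hy
  have s₁ := hp'.hasSum (y := y) hy
  have s₂ := hq'.hasSum (y := y) hy
  have hterm : (fun n => p n fun _ => y) = (fun n => q n fun _ => y) := by
    funext n
    have e₁ := hp.factorial_smul y n
    have e₂ := hq.factorial_smul y n
    have eF : iteratedFDeriv ℝ n f 0 (fun _ => y) = iteratedFDeriv ℝ n g 0 (fun _ => y) :=
      iteratedFDeriv_apply_eq_of_iteratedDeriv_eq (h n) _
    have hsm : (n.factorial : ℝ) • p n (fun _ => y) = (n.factorial : ℝ) • q n (fun _ => y) := by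
      rw [Nat.cast_smul_eq_nsmul, Nat.cast_smul_eq_nsmul, e₁, e₂, eF]
    exact smul_right_injective E (by exact_mod_cast n.factorial_ne_zero) hsm
  have : f (0 + y) = g (0 + y) := s₁.unique (hterm ▸ s₂)
  simpa using this

lemma taylorComp_congr {G : Type*} [NormedAddCommGroup G] [NormedSpace ℝ G]
    (q : FormalMultilinearSeries ℝ F G) (p₁ p₂ : FormalMultilinearSeries ℝ E F) {M : ℕ}
    (h : ∀ j, j ≤ M → p₁ j = p₂ j) : q.taylorComp p₁ M = q.taylorComp p₂ M := by
  unfold FormalMultilinearSeries.taylorComp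
  refine Finset.sum_congr rfl fun c _ => ?_
  unfold FormalMultilinearSeries.compAlongOrderedFinpartition
  congr 1
  funext i
  exact h _ (c.partSize_le i)

lemma jet_comp [CompleteSpace F] {T : E → F} {φ₁ φ₂ : ℝ → E} {M : ℕ}
    (hT : AnalyticAt ℝ T (φ₁ 0)) (h₁ : AnalyticAt ℝ φ₁ 0) (h₂ : AnalyticAt ℝ φ₂ 0)
    (h0 : φ₁ 0 = φ₂ 0)
    (hjet : ∀ j, j ≤ M → iteratedDeriv j φ₁ 0 = iteratedDeriv j φ₂ 0) :
    iteratedDeriv M (fun v => T (φ₁ v)) 0 = iteratedDeriv M (fun v => T (φ₂ v)) 0 := by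
  obtain ⟨t, ht_an, ht_open, ht_mem⟩ := _root_.eventually_nhds_iff.mp hT.eventually_analyticAt
  have hc₁ : ∀ᶠ v in nhds (0 : ℝ), φ₁ v ∈ t :=
    h₁.continuousAt.preimage_mem_nhds (ht_open.mem_nhds ht_mem)
  have hc₂ : ∀ᶠ v in nhds (0 : ℝ), φ₂ v ∈ t := by
    apply h₂.continuousAt.preimage_mem_nhds (ht_open.mem_nhds ?_)
    rw [← h0]; exact ht_mem
  obtain ⟨ε, hε, hball⟩ := Metric.eventually_nhds_iff_ball.mp
    ((h₁.eventually_analyticAt.and h₂.eventually_analyticAt).and (hc₁.and hc₂))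
  have hs_open : IsOpen (Metric.ball (0 : ℝ) ε) := Metric.isOpen_ball
  have h0s : (0 : ℝ) ∈ Metric.ball (0 : ℝ) ε := Metric.mem_ball_self hε
  have hφ₁ : AnalyticOnNhd ℝ φ₁ (Metric.ball (0 : ℝ) ε) := fun v hv => ((hball v hv).1).1
  have hφ₂ : AnalyticOnNhd ℝ φ₂ (Metric.ball (0 : ℝ) ε) := fun v hv => ((hball v hv).1).2
  have hm₁ : Set.MapsTo φ₁ (Metric.ball (0 : ℝ) ε) t := fun v hv => ((hball v hv).2).1
  have hm₂ : Set.MapsTo φ₂ (Metric.ball (0 : ℝ) ε) t := fun v hv => ((hball v hv).2).2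
  have hTt : AnalyticOnNhd ℝ T t := fun y hy => ht_an y hy
  have hud_s : UniqueDiffOn ℝ (Metric.ball (0 : ℝ) ε) := hs_open.uniqueDiffOn
  have hud_t : UniqueDiffOn ℝ t := ht_open.uniqueDiffOn
  have hq : HasFTaylorSeriesUpToOn ((M : ℕ∞) : WithTop ℕ∞) T (ftaylorSeriesWithin ℝ T t) t :=
    (hTt.contDiffOn hud_t).ftaylorSeriesWithin hud_t
  have hp₁ : HasFTaylorSeriesUpToOn ((M : ℕ∞) : WithTop ℕ∞) φ₁
      (ftaylorSeriesWithin ℝ φ₁ (Metric.ball (0 : ℝ) ε)) (Metric.ball (0 : ℝ) ε) :=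
    (hφ₁.contDiffOn hud_s).ftaylorSeriesWithin hud_s
  have hp₂ : HasFTaylorSeriesUpToOn ((M : ℕ∞) : WithTop ℕ∞) φ₂
      (ftaylorSeriesWithin ℝ φ₂ (Metric.ball (0 : ℝ) ε)) (Metric.ball (0 : ℝ) ε) :=
    (hφ₂.contDiffOn hud_s).ftaylorSeriesWithin hud_s
  have H₁ := hq.comp hp₁ hm₁
  have H₂ := hq.comp hp₂ hm₂
  have hMle : ((M : ℕ) : WithTop ℕ∞) ≤ ((M : ℕ∞) : WithTop ℕ∞) := by
    exact_mod_cast le_rfl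
  have key₁ := H₁.eq_iteratedFDerivWithin_of_uniqueDiffOn hMle hud_s h0s
  have key₂ := H₂.eq_iteratedFDerivWithin_of_uniqueDiffOn hMle hud_s h0s
  have e₁ : iteratedFDeriv ℝ M (T ∘ φ₁) 0
      = ((ftaylorSeriesWithin ℝ T t) (φ₁ 0)).taylorComp
        (ftaylorSeriesWithin ℝ φ₁ (Metric.ball (0 : ℝ) ε) 0) M := by
    rw [key₁, iteratedFDerivWithin_of_isOpen M hs_open h0s]
  have e₂ : iteratedFDeriv ℝ M (T ∘ φ₂) 0
      = ((ftaylorSeriesWithin ℝ T t) (φ₂ 0)).taylorComp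
        (ftaylorSeriesWithin ℝ φ₂ (Metric.ball (0 : ℝ) ε) 0) M := by
    rw [key₂, iteratedFDerivWithin_of_isOpen M hs_open h0s]
  have hcoeff : ∀ j, j ≤ M → ftaylorSeriesWithin ℝ φ₁ (Metric.ball (0 : ℝ) ε) 0 j
      = ftaylorSeriesWithin ℝ φ₂ (Metric.ball (0 : ℝ) ε) 0 j := by
    intro j hj
    show iteratedFDerivWithin ℝ j φ₁ (Metric.ball (0 : ℝ) ε) 0
      = iteratedFDerivWithin ℝ j φ₂ (Metric.ball (0 : ℝ) ε) 0
    rw [iteratedFDerivWithin_of_isOpen j hs_open h0s,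
      iteratedFDerivWithin_of_isOpen j hs_open h0s]
    exact ContinuousMultilinearMap.ext fun m =>
      iteratedFDeriv_apply_eq_of_iteratedDeriv_eq (hjet j hj) m
  have efinal : iteratedFDeriv ℝ M (T ∘ φ₁) 0 = iteratedFDeriv ℝ M (T ∘ φ₂) 0 := by
    rw [e₁, e₂, h0, taylorComp_congr _ _ _ hcoeff]
  show iteratedDeriv M (T ∘ φ₁) 0 = iteratedDeriv M (T ∘ φ₂) 0
  rw [iteratedDeriv_eq_iteratedFDeriv, iteratedDeriv_eq_iteratedFDeriv, efinal]

lemma AnalyticAt.lcrossAt {α : Type*} [NormedAddCommGroup α] [NormedSpace ℝ α]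
    {f g : α → R3} {x : α} (hf : AnalyticAt ℝ f x) (hg : AnalyticAt ℝ g x) :
    AnalyticAt ℝ (fun y => lcross (f y) (g y)) x := by
  have f1 : AnalyticAt ℝ (fun y => (f y).1) x := analyticAt_fst.comp hf
  have f2 : AnalyticAt ℝ (fun y => (f y).2.1) x := analyticAt_fst.comp (analyticAt_snd.comp hf)
  have f3 : AnalyticAt ℝ (fun y => (f y).2.2) x := analyticAt_snd.comp (analyticAt_snd.comp hf)
  have g1 : AnalyticAt ℝ (fun y => (g y).1) x := analyticAt_fst.comp hg
  have g2 : AnalyticAt ℝ (fun y => (g y).2.1) x := analyticAt_fst.comp (analyticAt_snd.comp hg)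
  have g3 : AnalyticAt ℝ (fun y => (g y).2.2) x := analyticAt_snd.comp (analyticAt_snd.comp hg)
  exact ((f3.mul g2).sub (f2.mul g3)).prod
    (((f1.mul g3).sub (f3.mul g1)).prod ((f1.mul g2).sub (f2.mul g1)))

end JetHelpers


/-- uniqueness for the Cauchy problem with real-analytic data: two
real-analytic solutions of `ψ_uu + ψ_vv = 2ℋ(ψ) ψ_u ×_L ψ_v` on `ℝ × (−R,R)` with the
same Cauchy data on the real axis coincide. -/
theorem stmt12 (O : Set R3) (R : ℝ) (H : R3 → ℝ) (ψ₁ ψ₂ : ℝ × ℝ → R3)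
    (hR : 0 < R) (hO : IsOpen O) (hHa : AnalyticOnNhd ℝ H O)
    (hψ₁O : ∀ p ∈ Strip2 R, ψ₁ p ∈ O) (hψ₂O : ∀ p ∈ Strip2 R, ψ₂ p ∈ O)
    (hψ₁a : AnalyticOnNhd ℝ ψ₁ (Strip2 R)) (hψ₂a : AnalyticOnNhd ℝ ψ₂ (Strip2 R))
    (hsys₁ : ∀ p ∈ Strip2 R,
      pd1 (pd1 ψ₁) p + pd2 (pd2 ψ₁) p = (2 * H (ψ₁ p)) • lcross (pd1 ψ₁ p) (pd2 ψ₁ p))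
    (hsys₂ : ∀ p ∈ Strip2 R,
      pd1 (pd1 ψ₂) p + pd2 (pd2 ψ₂) p = (2 * H (ψ₂ p)) • lcross (pd1 ψ₂ p) (pd2 ψ₂ p))
    (hb0 : ∀ u : ℝ, ψ₁ (u, 0) = ψ₂ (u, 0))
    (hb1 : ∀ u : ℝ, pd2 ψ₁ (u, 0) = pd2 ψ₂ (u, 0)) :
    ∀ p ∈ Strip2 R, ψ₁ p = ψ₂ p := by
  have hUopen : IsOpen (Strip2 R) := by
    have he : Strip2 R = (fun p : ℝ × ℝ => p.2) ⁻¹' (Ioo (-R) R) := rfl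
    rw [he]; exact isOpen_Ioo.preimage continuous_snd
  have hmemline : ∀ u : ℝ, ((u, 0) : ℝ × ℝ) ∈ Strip2 R :=
    fun u => ⟨neg_lt_zero.mpr hR, hR⟩
  have key : ∀ n : ℕ, ∀ u : ℝ, pd2^[n] ψ₁ (u, 0) = pd2^[n] ψ₂ (u, 0) := by
    intro n
    induction n using Nat.strong_induction_on with
    | _ n IH =>
    match n, IH with
    | 0, _ => exact hb0
    | 1, _ => exact hb1
    | (m + 2), IH =>
      intro u₀
      -- auxiliary line equality facts
      have pdLine : ∀ j, j ≤ m + 1 → ∀ u : ℝ,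
          pd1 (pd2^[j] ψ₁) (u, 0) = pd1 (pd2^[j] ψ₂) (u, 0) := by
        intro j hj u
        have hfun : (fun t : ℝ => pd2^[j] ψ₁ (t, 0)) = (fun t : ℝ => pd2^[j] ψ₂ (t, 0)) :=
          funext fun t => IH j (by omega) t
        have d₁ : deriv (fun t : ℝ => pd2^[j] ψ₁ (t, 0)) u = pd1 (pd2^[j] ψ₁) (u, 0) :=
          (hasDerivAt_slice1 ((hψ₁a.pd2_iter j _ (hmemline u)).differentiableAt)).deriv
        have d₂ : deriv (fun t : ℝ => pd2^[j] ψ₂ (t, 0)) u = pd1 (pd2^[j] ψ₂) (u, 0) :=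
          (hasDerivAt_slice1 ((hψ₂a.pd2_iter j _ (hmemline u)).differentiableAt)).deriv
        rw [← d₁, ← d₂, hfun]
      -- reduction via the PDE
      have reduce : ∀ ψ : ℝ × ℝ → R3, AnalyticOnNhd ℝ ψ (Strip2 R) →
          (∀ p ∈ Strip2 R, ψ p ∈ O) →
          (∀ p ∈ Strip2 R,
            pd1 (pd1 ψ) p + pd2 (pd2 ψ) p = (2 * H (ψ p)) • lcross (pd1 ψ p) (pd2 ψ p)) →
          pd2^[m + 2] ψ (u₀, 0) =
            iteratedDeriv m
              (fun v => (2 * H (ψ (u₀, v))) • lcross (pd1 ψ (u₀, v)) (pd2 ψ (u₀, v))) 0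
              - pd1 (pd1 (pd2^[m] ψ)) (u₀, 0) := by
        intro ψ ha hOψ hsys
        have hNa : AnalyticOnNhd ℝ
            (fun p => (2 * H (ψ p)) • lcross (pd1 ψ p) (pd2 ψ p)) (Strip2 R) := by
          intro p hp
          have hH : AnalyticAt ℝ (fun q => H (ψ q)) p := (hHa _ (hOψ p hp)).comp (ha p hp)
          exact (analyticAt_const.mul hH).smul ((ha.pd1' p hp).lcrossAt (ha.pd2' p hp))
        have h11 : AnalyticOnNhd ℝ (pd1 (pd1 ψ)) (Strip2 R) := ha.pd1'.pd1'
        have e0 : Set.EqOn (pd2 (pd2 ψ))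
            (fun p => (2 * H (ψ p)) • lcross (pd1 ψ p) (pd2 ψ p) - pd1 (pd1 ψ) p)
            (Strip2 R) := by
          intro p hp
          have := hsys p hp
          have h' : pd2 (pd2 ψ) p =
              (2 * H (ψ p)) • lcross (pd1 ψ p) (pd2 ψ p) - pd1 (pd1 ψ) p := by
            rw [← this]; abel
          exact h'
        have e1 : pd2^[m + 2] ψ (u₀, 0) =
            pd2^[m] (fun p => (2 * H (ψ p)) • lcross (pd1 ψ p) (pd2 ψ p) - pd1 (pd1 ψ) p)
              (u₀, 0) := by
          have hiter : pd2^[m + 2] ψ = pd2^[m] (pd2 (pd2 ψ)) := by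
            rw [Function.iterate_succ_apply, Function.iterate_succ_apply]
          rw [hiter]
          exact eqOn_pd2_iter hUopen e0 m (hmemline u₀)
        have e2 : pd2^[m]
            (fun p => (2 * H (ψ p)) • lcross (pd1 ψ p) (pd2 ψ p) - pd1 (pd1 ψ) p) (u₀, 0)
            = pd2^[m] (fun p => (2 * H (ψ p)) • lcross (pd1 ψ p) (pd2 ψ p)) (u₀, 0)
              - pd2^[m] (pd1 (pd1 ψ)) (u₀, 0) :=
          pd2_iter_sub hUopen hNa h11 m (hmemline u₀)
        have e3 : pd2^[m] (fun p => (2 * H (ψ p)) • lcross (pd1 ψ p) (pd2 ψ p)) (u₀, 0) =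
            iteratedDeriv m
              (fun v => (2 * H (ψ (u₀, v))) • lcross (pd1 ψ (u₀, v)) (pd2 ψ (u₀, v))) 0 :=
          (slice2_iteratedDeriv hUopen hNa m (hmemline u₀)).symm
        have e4 : pd2^[m] (pd1 (pd1 ψ)) (u₀, 0) = pd1 (pd1 (pd2^[m] ψ)) (u₀, 0) := by
          have c1 := pd_comm_iter hUopen ha.pd1' m (hmemline u₀)
          have c2 : Set.EqOn (pd2^[m] (pd1 ψ)) (pd1 (pd2^[m] ψ)) (Strip2 R) :=
            pd_comm_iter hUopen ha m
          have c3 := eqOn_pd1 hUopen c2 (hmemline u₀)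
          exact c1.trans c3
        rw [e1, e2, e3, e4]
      -- nonlinear parts agree
      have hcurve : AnalyticAt ℝ (fun v : ℝ => ((u₀, v) : ℝ × ℝ)) 0 :=
        analyticAt_const.prod analyticAt_id
      have hsl : ∀ f : ℝ × ℝ → R3, AnalyticOnNhd ℝ f (Strip2 R) →
          AnalyticAt ℝ (fun v : ℝ => f (u₀, v)) 0 :=
        fun f hf => (hf _ (hmemline u₀)).comp hcurve
      have comp1 : ∀ j, j ≤ m + 1 →
          iteratedDeriv j (fun v : ℝ => ψ₁ (u₀, v)) 0
            = iteratedDeriv j (fun v : ℝ => ψ₂ (u₀, v)) 0 := by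
        intro j hj
        rw [slice2_iteratedDeriv hUopen hψ₁a j (hmemline u₀),
          slice2_iteratedDeriv hUopen hψ₂a j (hmemline u₀)]
        exact IH j (by omega) u₀
      have comp2 : ∀ j, j ≤ m + 1 →
          iteratedDeriv j (fun v : ℝ => pd1 ψ₁ (u₀, v)) 0
            = iteratedDeriv j (fun v : ℝ => pd1 ψ₂ (u₀, v)) 0 := by
        intro j hj
        rw [slice2_iteratedDeriv hUopen hψ₁a.pd1' j (hmemline u₀),
          slice2_iteratedDeriv hUopen hψ₂a.pd1' j (hmemline u₀),
          pd_comm_iter hUopen hψ₁a j (hmemline u₀),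
          pd_comm_iter hUopen hψ₂a j (hmemline u₀)]
        exact pdLine j hj u₀
      have comp3 : ∀ j, j ≤ m →
          iteratedDeriv j (fun v : ℝ => pd2 ψ₁ (u₀, v)) 0
            = iteratedDeriv j (fun v : ℝ => pd2 ψ₂ (u₀, v)) 0 := by
        intro j hj
        rw [slice2_iteratedDeriv hUopen hψ₁a.pd2' j (hmemline u₀),
          slice2_iteratedDeriv hUopen hψ₂a.pd2' j (hmemline u₀),
          ← Function.iterate_succ_apply pd2 j ψ₁, ← Function.iterate_succ_apply pd2 j ψ₂]
        exact IH (j + 1) (by omega) u₀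
      have hjets : ∀ j, j ≤ m →
          iteratedDeriv j
            (fun v : ℝ => (ψ₁ (u₀, v), (pd1 ψ₁ (u₀, v), pd2 ψ₁ (u₀, v)))) 0
          = iteratedDeriv j
            (fun v : ℝ => (ψ₂ (u₀, v), (pd1 ψ₂ (u₀, v), pd2 ψ₂ (u₀, v)))) 0 := by
        intro j hj
        rw [iteratedDeriv_prodMk (hsl _ hψ₁a) ((hsl _ hψ₁a.pd1').prod (hsl _ hψ₁a.pd2')),
          iteratedDeriv_prodMk (hsl _ hψ₁a.pd1') (hsl _ hψ₁a.pd2'),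
          iteratedDeriv_prodMk (hsl _ hψ₂a) ((hsl _ hψ₂a.pd1').prod (hsl _ hψ₂a.pd2')),
          iteratedDeriv_prodMk (hsl _ hψ₂a.pd1') (hsl _ hψ₂a.pd2'),
          comp1 j (by omega), comp2 j (by omega), comp3 j (by omega)]
      have hΦ₁a : AnalyticAt ℝ
          (fun v : ℝ => (ψ₁ (u₀, v), (pd1 ψ₁ (u₀, v), pd2 ψ₁ (u₀, v)))) 0 :=
        (hsl _ hψ₁a).prod ((hsl _ hψ₁a.pd1').prod (hsl _ hψ₁a.pd2'))
      have hΦ₂a : AnalyticAt ℝ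
          (fun v : ℝ => (ψ₂ (u₀, v), (pd1 ψ₂ (u₀, v), pd2 ψ₂ (u₀, v)))) 0 :=
        (hsl _ hψ₂a).prod ((hsl _ hψ₂a.pd1').prod (hsl _ hψ₂a.pd2'))
      have hTa : AnalyticAt ℝ
          (fun w : R3 × (R3 × R3) => (2 * H w.1) • lcross w.2.1 w.2.2)
          ((fun v : ℝ => (ψ₁ (u₀, v), (pd1 ψ₁ (u₀, v), pd2 ψ₁ (u₀, v)))) 0) := by
        have hHat : AnalyticAt ℝ H (ψ₁ (u₀, 0)) := hHa _ (hψ₁O _ (hmemline u₀))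
        have a1 : AnalyticAt ℝ (fun w : R3 × (R3 × R3) => w.1)
            ((ψ₁ (u₀, 0), (pd1 ψ₁ (u₀, 0), pd2 ψ₁ (u₀, 0))) : R3 × (R3 × R3)) := analyticAt_fst
        have aH : AnalyticAt ℝ (fun w : R3 × (R3 × R3) => H w.1)
            ((ψ₁ (u₀, 0), (pd1 ψ₁ (u₀, 0), pd2 ψ₁ (u₀, 0))) : R3 × (R3 × R3)) :=
          hHat.comp (f := fun w : R3 × (R3 × R3) => w.1) a1
        have asc : AnalyticAt ℝ (fun w : R3 × (R3 × R3) => 2 * H w.1)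
            ((ψ₁ (u₀, 0), (pd1 ψ₁ (u₀, 0), pd2 ψ₁ (u₀, 0))) : R3 × (R3 × R3)) :=
          analyticAt_const.mul aH
        have a21 : AnalyticAt ℝ (fun w : R3 × (R3 × R3) => w.2.1)
            ((ψ₁ (u₀, 0), (pd1 ψ₁ (u₀, 0), pd2 ψ₁ (u₀, 0))) : R3 × (R3 × R3)) :=
          analyticAt_fst.comp analyticAt_snd
        have a22 : AnalyticAt ℝ (fun w : R3 × (R3 × R3) => w.2.2)
            ((ψ₁ (u₀, 0), (pd1 ψ₁ (u₀, 0), pd2 ψ₁ (u₀, 0))) : R3 × (R3 × R3)) :=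
          analyticAt_snd.comp analyticAt_snd
        exact asc.smul (a21.lcrossAt a22)
      have h00 : (fun v : ℝ => (ψ₁ (u₀, v), (pd1 ψ₁ (u₀, v), pd2 ψ₁ (u₀, v)))) 0
          = (fun v : ℝ => (ψ₂ (u₀, v), (pd1 ψ₂ (u₀, v), pd2 ψ₂ (u₀, v)))) 0 := by
        have := hjets 0 (Nat.zero_le _)
        simpa [iteratedDeriv_zero] using this
      have part1 := jet_comp (M := m)
        (T := fun w : R3 × (R3 × R3) => (2 * H w.1) • lcross w.2.1 w.2.2)
        hTa hΦ₁a hΦ₂a h00 hjets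
      have part2 : pd1 (pd1 (pd2^[m] ψ₁)) (u₀, 0) = pd1 (pd1 (pd2^[m] ψ₂)) (u₀, 0) := by
        have hfun : (fun t : ℝ => pd1 (pd2^[m] ψ₁) (t, 0))
            = (fun t : ℝ => pd1 (pd2^[m] ψ₂) (t, 0)) :=
          funext fun t => pdLine m (by omega) t
        have d₁ : deriv (fun t : ℝ => pd1 (pd2^[m] ψ₁) (t, 0)) u₀
            = pd1 (pd1 (pd2^[m] ψ₁)) (u₀, 0) :=
          (hasDerivAt_slice1 (((hψ₁a.pd2_iter m).pd1' _ (hmemline u₀)).differentiableAt)).deriv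
        have d₂ : deriv (fun t : ℝ => pd1 (pd2^[m] ψ₂) (t, 0)) u₀
            = pd1 (pd1 (pd2^[m] ψ₂)) (u₀, 0) :=
          (hasDerivAt_slice1 (((hψ₂a.pd2_iter m).pd1' _ (hmemline u₀)).differentiableAt)).deriv
        rw [← d₁, ← d₂, hfun]
      rw [reduce ψ₁ hψ₁a hψ₁O hsys₁, reduce ψ₂ hψ₂a hψ₂O hsys₂, part1, part2]
  -- conclude by the 1-D identity principle on vertical slices
  rintro ⟨u, v⟩ hp
  have h0Ioo : (0 : ℝ) ∈ Ioo (-R) R := ⟨neg_lt_zero.mpr hR, hR⟩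
  have hcurve : AnalyticOnNhd ℝ (fun t : ℝ => ((u, t) : ℝ × ℝ)) (Ioo (-R) R) :=
    fun t _ => analyticAt_const.prod analyticAt_id
  have hmaps : Set.MapsTo (fun t : ℝ => ((u, t) : ℝ × ℝ)) (Ioo (-R) R) (Strip2 R) :=
    fun t ht => ⟨ht.1, ht.2⟩
  have hf : AnalyticOnNhd ℝ (fun t : ℝ => ψ₁ (u, t)) (Ioo (-R) R) :=
    hψ₁a.comp hcurve hmaps
  have hg : AnalyticOnNhd ℝ (fun t : ℝ => ψ₂ (u, t)) (Ioo (-R) R) :=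
    hψ₂a.comp hcurve hmaps
  have hev : (fun t : ℝ => ψ₁ (u, t)) =ᶠ[nhds (0 : ℝ)] (fun t : ℝ => ψ₂ (u, t)) := by
    apply eventuallyEq_of_iteratedDeriv_eq (hf 0 h0Ioo) (hg 0 h0Ioo)
    intro n
    rw [slice2_iteratedDeriv hUopen hψ₁a n (hmemline u),
      slice2_iteratedDeriv hUopen hψ₂a n (hmemline u)]
    exact key n u
  exact hf.eqOn_of_preconnected_of_eventuallyEq hg isPreconnected_Ioo h0Ioo hev ⟨hp.1, hp.2⟩
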